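/- In W_n over a commutative domain k (any characteristic), the alternating sum Ω_n = Σ_{σ ∈ S_n} (-1)^{|σ|} x_{σ(1)}···x_{σ(n)} satisfies x_i Ω_n = (-1)^{n-1} Ω_n x_i for all i = 1,...,n. In particular, when n is odd, Ω_n is central in W_n. -/

import Mathlib

/-- The defining relations of the `(-1)`-quantum Weyl algebra `V_n(𝒜)`:
`x_i x_j + x_j x_i = a_{ij}` for `i < j`. -/
inductive VnRel (k : Type*) [CommRing k] (n : ℕ) (a : Fin n → Fin n → k) :
    FreeAlgebra k (Fin n) → FreeAlgebra k (Fin n) → Prop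
  | rel (i j : Fin n) (h : i < j) :
      VnRel k n a
        (FreeAlgebra.ι k i * FreeAlgebra.ι k j + FreeAlgebra.ι k j * FreeAlgebra.ι k i)
        (algebraMap k (FreeAlgebra k (Fin n)) (a i j))

/-- The `(-1)`-quantum Weyl algebra `V_n(𝒜) = k⟨x₁,…,xₙ⟩/(xᵢxⱼ + xⱼxᵢ - a_{ij}, i < j)`. -/
abbrev Vn (k : Type*) [CommRing k] (n : ℕ) (a : Fin n → Fin n → k) := RingQuot (VnRel k n a)

/-- The generators `x_i` of `V_n(𝒜)`. -/
noncomputable def VnX (k : Type*) [CommRing k] (n : ℕ) (a : Fin n → Fin n → k) (i : Fin n) :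
    Vn k n a :=
  RingQuot.mkAlgHom k (VnRel k n a) (FreeAlgebra.ι k i)

/-- The antisymmetrized product `Ωₙ = ∑_{σ ∈ Sₙ} (-1)^|σ| x_{σ(1)} ⋯ x_{σ(n)}` of the
generators of `W_n`. -/
noncomputable def WnOmega (k : Type*) [CommRing k] (n : ℕ) : Vn k n (fun _ _ => 1) :=
  ∑ σ : Equiv.Perm (Fin n),
    (Equiv.Perm.sign σ : ℤ) • (List.ofFn fun i => VnX k n (fun _ _ => 1) (σ i)).prod

namespace WnAux

lemma succAbove_val {m : ℕ} (p : Fin (m+1)) (q : Fin m) :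
    (p.succAbove q : ℕ) = if (q:ℕ) < (p:ℕ) then (q:ℕ) else (q:ℕ)+1 := by
  rw [Fin.succAbove]
  split_ifs with h1 h2 h2 <;> simp_all [Fin.lt_def]

def flip2 {m : ℕ} (x : Fin (m+2) × Fin (m+1)) : Fin (m+2) × Fin (m+1) :=
  if h : (x.2:ℕ) < (x.1:ℕ) then
    (⟨x.2, by omega⟩, ⟨(x.1:ℕ)-1, by have := x.1.isLt; omega⟩)
  else
    (⟨(x.2:ℕ)+1, by have := x.2.isLt; omega⟩, ⟨x.1, by have := x.2.isLt; omega⟩)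

lemma flip2_fst_val {m : ℕ} (x : Fin (m+2) × Fin (m+1)) :
    ((flip2 x).1 : ℕ) = if (x.2:ℕ) < (x.1:ℕ) then (x.2:ℕ) else (x.2:ℕ)+1 := by
  rw [flip2]; split_ifs with h <;> simp [h]

lemma flip2_snd_val {m : ℕ} (x : Fin (m+2) × Fin (m+1)) :
    ((flip2 x).2 : ℕ) = if (x.2:ℕ) < (x.1:ℕ) then (x.1:ℕ)-1 else (x.1:ℕ) := by
  rw [flip2]; split_ifs with h <;> simp [h]

lemma flip2_fst {m : ℕ} (x : Fin (m+2) × Fin (m+1)) :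
    (flip2 x).1 = x.1.succAbove x.2 := by
  apply Fin.ext; rw [succAbove_val, flip2_fst_val]

lemma flip2_apply {m : ℕ} (x : Fin (m+2) × Fin (m+1)) :
    (flip2 x).1.succAbove (flip2 x).2 = x.1 := by
  have h1 := x.1.isLt; have h2 := x.2.isLt
  apply Fin.ext
  rw [succAbove_val, flip2_fst_val, flip2_snd_val]
  split_ifs with h h3 h3 <;> omega

lemma flip2_flip2 {m : ℕ} (x : Fin (m+2) × Fin (m+1)) : flip2 (flip2 x) = x := by
  have h1 := x.1.isLt; have h2 := x.2.isLt
  have f1 := flip2_fst_val x; have f2 := flip2_snd_val x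
  have g1 := flip2_fst_val (flip2 x); have g2 := flip2_snd_val (flip2 x)
  apply Prod.ext <;> apply Fin.ext
  · rw [g1]; split_ifs at * <;> omega
  · rw [g2]; split_ifs at * <;> omega

lemma flip2_ne {m : ℕ} (x : Fin (m+2) × Fin (m+1)) : flip2 x ≠ x := by
  have h1 := x.1.isLt; have h2 := x.2.isLt
  have f1 := flip2_fst_val x
  intro hx
  rw [hx] at f1
  split_ifs at f1 <;> omega

lemma flip2_simplicial {m : ℕ} (x : Fin (m+2) × Fin (m+1)) (k : Fin m) :
    (flip2 x).1.succAbove ((flip2 x).2.succAbove k) = x.1.succAbove (x.2.succAbove k) := by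
  have h1 := x.1.isLt; have h2 := x.2.isLt; have h3 := k.isLt
  apply Fin.ext
  rw [succAbove_val, succAbove_val, succAbove_val, succAbove_val, flip2_fst_val, flip2_snd_val]
  split_ifs <;> omega

lemma flip2_sign {m : ℕ} (x : Fin (m+2) × Fin (m+1)) :
    ((-1:ℤ) ^ (((flip2 x).1:ℕ) + ((flip2 x).2:ℕ))) = -(-1:ℤ) ^ ((x.1:ℕ) + (x.2:ℕ)) := by
  have h1 := x.1.isLt; have h2 := x.2.isLt
  have f1 := flip2_fst_val x; have f2 := flip2_snd_val x
  have key : ((flip2 x).1:ℕ) + ((flip2 x).2:ℕ) + 1 = (x.1:ℕ) + (x.2:ℕ) ∨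
      (x.1:ℕ) + (x.2:ℕ) + 1 = ((flip2 x).1:ℕ) + ((flip2 x).2:ℕ) := by
    split_ifs at f1 f2 <;> omega
  rcases key with h | h
  · rw [← h, pow_succ]; ring
  · rw [← h, pow_succ]; ring

end WnAux

namespace WnAux

variable {A : Type*} [Ring A]

def Om : (m : ℕ) → (Fin m → A) → A
  | 0, _ => 1
  | m+1, f => ∑ p : Fin (m+1), (-1:ℤ)^(p:ℕ) • (f p * Om m (fun k => f (p.succAbove k)))

def Lam : (m : ℕ) → (Fin m → A) → A
  | 0, _ => 0
  | m+1, f => ∑ p : Fin (m+1), (-1:ℤ)^(p:ℕ) • Om m (fun k => f (p.succAbove k))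

@[simp] lemma Om_zero (f : Fin 0 → A) : Om 0 f = 1 := rfl
lemma Om_succ (m : ℕ) (f : Fin (m+1) → A) :
    Om (m+1) f = ∑ p : Fin (m+1), (-1:ℤ)^(p:ℕ) • (f p * Om m (fun k => f (p.succAbove k))) := rfl
@[simp] lemma Lam_zero (f : Fin 0 → A) : Lam 0 f = 0 := rfl
lemma Lam_succ (m : ℕ) (f : Fin (m+1) → A) :
    Lam (m+1) f = ∑ p : Fin (m+1), (-1:ℤ)^(p:ℕ) • Om m (fun k => f (p.succAbove k)) := rfl

lemma neg_one_pow_smul_congr {a b : ℕ} (h : a % 2 = b % 2) (x y : A) (hxy : x = y) :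
    ((-1:ℤ)^a) • x = ((-1:ℤ)^b) • y := by
  rw [hxy, neg_one_pow_eq_pow_mod_two (R:=ℤ), h, ← neg_one_pow_eq_pow_mod_two]

lemma flip2_parity {m : ℕ} (x : Fin (m+2) × Fin (m+1)) :
    (((flip2 x).1:ℕ) + ((flip2 x).2:ℕ)) % 2 = (((x.1:ℕ) + ((x.2:ℕ))) + 1) % 2 := by
  have h1 := x.1.isLt; have h2 := x.2.isLt
  have f1 := flip2_fst_val x; have f2 := flip2_snd_val x
  split_ifs at f1 f2 <;> omega

lemma commute_Om (c : A) (m : ℕ) (f : Fin m → A) (h : ∀ b, Commute c (f b)) :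
    Commute c (Om m f) := by
  induction m with
  | zero => exact Commute.one_right c
  | succ m ih =>
    rw [Om_succ]
    refine Commute.sum_right _ _ _ (fun p _ => ?_)
    rw [zsmul_eq_mul]
    exact (Int.commute_cast c _).mul_right ((h p).mul_right (ih _ (fun b => h _)))

lemma flip2_sum {m : ℕ} (F : Fin (m+2) × Fin (m+1) → A) :
    ∑ x : Fin (m+2) × Fin (m+1), F (flip2 x) = ∑ x : Fin (m+2) × Fin (m+1), F x :=
  Fintype.sum_bijective flip2 (Function.Involutive.bijective flip2_flip2) _ _ (fun _ => rfl)

lemma Om_last (m : ℕ) (f : Fin (m+1) → A) :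
    Om (m+1) f = ∑ p : Fin (m+1), (-1:ℤ)^(m + (p:ℕ)) • (Om m (fun k => f (p.succAbove k)) * f p) := by
  induction m with
  | zero => simp [Om_succ]
  | succ m ih =>
    have LHS : Om (m+2) f =
        ∑ x : Fin (m+2) × Fin (m+1), (-1:ℤ)^((x.1:ℕ) + (m + (x.2:ℕ))) •
          (f x.1 * Om m (fun k => f (x.1.succAbove (x.2.succAbove k))) * f (x.1.succAbove x.2)) := by
      rw [Om_succ, Fintype.sum_prod_type]
      refine Finset.sum_congr rfl (fun p _ => ?_)
      rw [ih, Finset.mul_sum, Finset.smul_sum]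
      refine Finset.sum_congr rfl (fun q _ => ?_)
      rw [mul_smul_comm, smul_smul, ← pow_add, ← mul_assoc]
    have RHS : ∑ p : Fin (m+2), (-1:ℤ)^((m+1) + (p:ℕ)) •
          (Om (m+1) (fun k => f (p.succAbove k)) * f p) =
        ∑ x : Fin (m+2) × Fin (m+1), (-1:ℤ)^((m+1) + (x.1:ℕ) + (x.2:ℕ)) •
          (f (x.1.succAbove x.2) * Om m (fun k => f (x.1.succAbove (x.2.succAbove k))) * f x.1) := by
      rw [Fintype.sum_prod_type]
      refine Finset.sum_congr rfl (fun p _ => ?_)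
      rw [Om_succ, Finset.sum_mul, Finset.smul_sum]
      refine Finset.sum_congr rfl (fun q _ => ?_)
      rw [smul_mul_assoc, smul_smul, ← pow_add]
    rw [LHS, RHS, ← flip2_sum]
    refine Finset.sum_congr rfl (fun x _ => ?_)
    refine neg_one_pow_smul_congr ?_ _ _ ?_
    · have := flip2_parity x; omega
    · have hOm : (fun k => f ((flip2 x).1.succAbove ((flip2 x).2.succAbove k))) =
          (fun k => f (x.1.succAbove (x.2.succAbove k))) :=
        funext (fun k => congrArg f (flip2_simplicial x k))
      rw [hOm, flip2_apply, flip2_fst]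

end WnAux

namespace WnAux

variable {A : Type*} [Ring A]

lemma neg_smul_pow (a : ℕ) (y : A) : -((-1:ℤ)^a • y) = (-1:ℤ)^(a+1) • y := by
  rw [pow_succ, mul_comm, mul_smul, neg_one_zsmul]

lemma Lam_last (m : ℕ) (f : Fin (m+2) → A) :
    Lam (m+2) f = ∑ p : Fin (m+2), (-1:ℤ)^((m+1) + (p:ℕ)) •
      (Lam (m+1) (fun k => f (p.succAbove k)) * f p) := by
  have LHS : Lam (m+2) f = ∑ x : Fin (m+2) × Fin (m+1), (-1:ℤ)^((x.1:ℕ) + (m + (x.2:ℕ))) •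
      (Om m (fun k => f (x.1.succAbove (x.2.succAbove k))) * f (x.1.succAbove x.2)) := by
    rw [Lam_succ, Fintype.sum_prod_type]
    refine Finset.sum_congr rfl (fun p _ => ?_)
    rw [Om_last, Finset.smul_sum]
    refine Finset.sum_congr rfl (fun q _ => ?_)
    rw [smul_smul, ← pow_add]
  have RHS : ∑ p : Fin (m+2), (-1:ℤ)^((m+1) + (p:ℕ)) •
        (Lam (m+1) (fun k => f (p.succAbove k)) * f p) =
      ∑ x : Fin (m+2) × Fin (m+1), (-1:ℤ)^((m+1) + (x.1:ℕ) + (x.2:ℕ)) •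
        (Om m (fun k => f (x.1.succAbove (x.2.succAbove k))) * f x.1) := by
    rw [Fintype.sum_prod_type]
    refine Finset.sum_congr rfl (fun p _ => ?_)
    rw [Lam_succ, Finset.sum_mul, Finset.smul_sum]
    refine Finset.sum_congr rfl (fun q _ => ?_)
    rw [smul_mul_assoc, smul_smul, ← pow_add]
  rw [LHS, RHS, ← flip2_sum]
  refine Finset.sum_congr rfl (fun x _ => ?_)
  refine neg_one_pow_smul_congr ?_ _ _ ?_
  · have := flip2_parity x; omega
  · have hOm : (fun k => f ((flip2 x).1.succAbove ((flip2 x).2.succAbove k))) =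
        (fun k => f (x.1.succAbove (x.2.succAbove k))) :=
      funext (fun k => congrArg f (flip2_simplicial x k))
    rw [hOm, flip2_apply]

lemma Lam_push (m : ℕ) (f : Fin (m+2) → A) :
    ∑ p : Fin (m+2), (-1:ℤ)^(p:ℕ) • (f p * Lam (m+1) (fun k => f (p.succAbove k))) =
      - Lam (m+2) f := by
  have LHS : ∑ p : Fin (m+2), (-1:ℤ)^(p:ℕ) • (f p * Lam (m+1) (fun k => f (p.succAbove k))) =
      ∑ x : Fin (m+2) × Fin (m+1), (-1:ℤ)^((x.1:ℕ) + (x.2:ℕ)) •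
        (f x.1 * Om m (fun k => f (x.1.succAbove (x.2.succAbove k)))) := by
    rw [Fintype.sum_prod_type]
    refine Finset.sum_congr rfl (fun p _ => ?_)
    rw [Lam_succ, Finset.mul_sum, Finset.smul_sum]
    refine Finset.sum_congr rfl (fun q _ => ?_)
    rw [mul_smul_comm, smul_smul, ← pow_add]
  have RHS : Lam (m+2) f = ∑ x : Fin (m+2) × Fin (m+1), (-1:ℤ)^((x.1:ℕ) + (x.2:ℕ)) •
      (f (x.1.succAbove x.2) * Om m (fun k => f (x.1.succAbove (x.2.succAbove k)))) := by
    rw [Lam_succ, Fintype.sum_prod_type]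
    refine Finset.sum_congr rfl (fun p _ => ?_)
    rw [Om_succ, Finset.smul_sum]
    refine Finset.sum_congr rfl (fun q _ => ?_)
    rw [smul_smul, ← pow_add]
  rw [LHS, RHS, ← flip2_sum, ← Finset.sum_neg_distrib]
  refine Finset.sum_congr rfl (fun x _ => ?_)
  rw [neg_smul_pow]
  refine neg_one_pow_smul_congr ?_ _ _ ?_
  · have := flip2_parity x; omega
  · have hOm : (fun k => f ((flip2 x).1.succAbove ((flip2 x).2.succAbove k))) =
        (fun k => f (x.1.succAbove (x.2.succAbove k))) :=
      funext (fun k => congrArg f (flip2_simplicial x k))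
    rw [hOm, flip2_fst]

lemma Lam_vanish (m : ℕ) (g : Fin (m+1) → A) :
    ∑ q : Fin (m+1), (-1:ℤ)^(q:ℕ) • Lam m (fun k => g (q.succAbove k)) = 0 := by
  cases m with
  | zero => simp
  | succ m =>
    have LHS : ∑ q : Fin (m+2), (-1:ℤ)^(q:ℕ) • Lam (m+1) (fun k => g (q.succAbove k)) =
        ∑ x : Fin (m+2) × Fin (m+1), (-1:ℤ)^((x.1:ℕ) + (x.2:ℕ)) •
          Om m (fun k => g (x.1.succAbove (x.2.succAbove k))) := by
      rw [Fintype.sum_prod_type]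
      refine Finset.sum_congr rfl (fun p _ => ?_)
      rw [Lam_succ, Finset.smul_sum]
      refine Finset.sum_congr rfl (fun q _ => ?_)
      rw [smul_smul, ← pow_add]
    rw [LHS]
    refine Finset.sum_involution (fun x _ => flip2 x) (fun x _ => ?_)
      (fun x _ _ => flip2_ne x) (fun x _ => Finset.mem_univ _) (fun x _ => flip2_flip2 x)
    have hOm : (fun k => g ((flip2 x).1.succAbove ((flip2 x).2.succAbove k))) =
        (fun k => g (x.1.succAbove (x.2.succAbove k))) :=
      funext (fun k => congrArg g (flip2_simplicial x k))
    rw [hOm]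
    rw [show ((-1:ℤ)^(((flip2 x).1:ℕ) + ((flip2 x).2:ℕ)) •
        Om m (fun k => g (x.1.succAbove (x.2.succAbove k)))) =
      -((-1:ℤ)^((x.1:ℕ) + (x.2:ℕ)) • Om m (fun k => g (x.1.succAbove (x.2.succAbove k)))) from ?_]
    · exact add_neg_cancel _
    rw [neg_smul_pow]
    exact neg_one_pow_smul_congr (by have := flip2_parity x; omega) _ _ rfl

end WnAux

namespace WnAux

variable {A : Type*} [Ring A]

/-- scaled version of `Lam_last` valid for all arities -/
lemma LB' (m : ℕ) (g : Fin (m+1) → A) :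
    (m:ℤ) • (∑ q : Fin (m+1), (-1:ℤ)^(q:ℕ) • (Lam m (fun k => g (q.succAbove k)) * g q))
      = (m:ℤ) • ((-1:ℤ)^m • Lam (m+1) g) := by
  cases m with
  | zero => simp
  | succ m =>
    congr 1
    rw [Lam_last, Finset.smul_sum]
    refine Finset.sum_congr rfl (fun q _ => ?_)
    rw [smul_smul, ← pow_add]
    exact neg_one_pow_smul_congr (by omega) _ _ rfl

/-- scaled version of `Lam_push` valid for all arities -/
lemma LP' (m : ℕ) (f : Fin (m+1) → A) :
    (m:ℤ) • (∑ p : Fin (m+1), (-1:ℤ)^(p:ℕ) • (f p * Lam m (fun k => f (p.succAbove k))))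
      = (m:ℤ) • (- Lam (m+1) f) := by
  cases m with
  | zero => simp
  | succ m => rw [Lam_push]

lemma OB (m : ℕ) (g : Fin (m+1) → A) (c : ℕ) :
    ∑ q : Fin (m+1), (-1:ℤ)^(c + (q:ℕ)) • (Om m (fun k => g (q.succAbove k)) * g q)
      = (-1:ℤ)^(c+m) • Om (m+1) g := by
  rw [Om_last, Finset.smul_sum]
  refine Finset.sum_congr rfl (fun q _ => ?_)
  rw [smul_smul, ← pow_add]
  exact neg_one_pow_smul_congr (by omega) _ _ rfl

lemma OUT (m : ℕ) (f : Fin m → A) (y : A) (hy : ∀ b, y * f b + f b * y = 1) :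
    y * Om m f = (-1:ℤ)^m • (Om m f * y) + (m:ℤ) • Lam m f := by
  induction m with
  | zero => simp
  | succ m ih =>
    have key : ∀ p : Fin (m+1), y * ((-1:ℤ)^(p:ℕ) • (f p * Om m (fun k => f (p.succAbove k)))) =
        (-1:ℤ)^(p:ℕ) • Om m (fun k => f (p.succAbove k))
        - (-1:ℤ)^m • ((-1:ℤ)^(p:ℕ) • ((f p * Om m (fun k => f (p.succAbove k))) * y))
        - (m:ℤ) • ((-1:ℤ)^(p:ℕ) • (f p * Lam m (fun k => f (p.succAbove k)))) := by
      intro p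
      have h1 : y * f p = 1 - f p * y := eq_sub_of_add_eq (hy p)
      rw [mul_smul_comm, ← mul_assoc, h1, sub_mul, one_mul, mul_assoc,
        ih (fun k => f (p.succAbove k)) (fun b => hy _), mul_add, mul_smul_comm,
        mul_smul_comm, ← mul_assoc (f p)]
      match_scalars <;> ring
    have hS2 : ∑ p : Fin (m+1), (-1:ℤ)^(p:ℕ) •
          ((f p * Om m (fun k => f (p.succAbove k))) * y) = Om (m+1) f * y := by
      rw [Om_succ, Finset.sum_mul]
      exact Finset.sum_congr rfl fun p _ => (smul_mul_assoc _ _ _).symm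
    rw [Om_succ, Finset.mul_sum, Finset.sum_congr rfl (fun p _ => key p),
      Finset.sum_sub_distrib, Finset.sum_sub_distrib, ← Lam_succ,
      ← Finset.smul_sum, ← Finset.smul_sum, hS2, LP', ← Om_succ]
    match_scalars <;> push_cast <;> ring

end WnAux

namespace WnAux

variable {A : Type*} [Ring A]

lemma neg_one_pow_congr {a b : ℕ} (h : a % 2 = b % 2) : ((-1:ℤ)^a) = (-1:ℤ)^b := by
  rw [neg_one_pow_eq_pow_mod_two (R:=ℤ), h, ← neg_one_pow_eq_pow_mod_two]

lemma Cprime (m : ℕ) (f : Fin (m+1) → A)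
    (hrel : ∀ a b : Fin (m+1), a ≠ b → f a * f b + f b * f a = 1) (i : Fin (m+1)) :
    Lam (m+1) f = (-1:ℤ)^(i:ℕ) • Om m (fun k => f (i.succAbove k))
      + ((-1:ℤ)^(m + (i:ℕ)) * (m:ℤ)) • (Lam m (fun k => f (i.succAbove k)) * f i) := by
  induction m with
  | zero =>
    have h0 : (i:ℕ) = 0 := by omega
    simp [Lam_succ, h0]
  | succ m ih =>
    have key : ∀ q : Fin (m+1),
        (-1:ℤ)^((m+1) + ((i.succAbove q : Fin (m+2)):ℕ)) •
          (Lam (m+1) (fun k => f ((i.succAbove q).succAbove k)) * f (i.succAbove q))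
        = (-1:ℤ)^(((i:ℕ)+m) + (q:ℕ)) •
            (Om m (fun k => f (i.succAbove (q.succAbove k))) * f (i.succAbove q))
          + ((-1:ℤ)^(i:ℕ) • ((m:ℤ) •
              ((-1:ℤ)^(q:ℕ) • Lam m (fun k => f (i.succAbove (q.succAbove k)))))
          - (-1:ℤ)^(i:ℕ) • ((m:ℤ) • ((-1:ℤ)^(q:ℕ) •
              ((Lam m (fun k => f (i.succAbove (q.succAbove k))) * f (i.succAbove q)) * f i)))) := by
      intro q
      have hip : (i.succAbove q).succAbove ((flip2 (i,q)).2) = i := by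
        have h := flip2_apply (i,q); rwa [flip2_fst] at h
      have hcomp : (fun k => f ((i.succAbove q).succAbove ((flip2 (i,q)).2.succAbove k))) =
          (fun k => f (i.succAbove (q.succAbove k))) :=
        funext fun k => congrArg f (by
          have h := flip2_simplicial (i,q) k; rwa [flip2_fst] at h)
      have hpar : (((i.succAbove q : Fin (m+2)):ℕ) + (((flip2 (i,q)).2 : Fin (m+1)):ℕ)) % 2
          = ((i:ℕ) + (q:ℕ) + 1) % 2 := by
        have h := flip2_parity (i,q); rwa [flip2_fst] at h
      have hrel' : ∀ a b : Fin (m+1), a ≠ b →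
          f ((i.succAbove q).succAbove a) * f ((i.succAbove q).succAbove b)
          + f ((i.succAbove q).succAbove b) * f ((i.succAbove q).succAbove a) = 1 :=
        fun a b hab => hrel _ _ (fun h => hab (Fin.succAbove_right_injective h))
      have h1 : f i * f (i.succAbove q) = 1 - f (i.succAbove q) * f i :=
        eq_sub_of_add_eq (hrel i _ (Ne.symm (Fin.succAbove_ne i q)))
      have h2 : (Lam m (fun k => f (i.succAbove (q.succAbove k))) * f i) * f (i.succAbove q)
          = Lam m (fun k => f (i.succAbove (q.succAbove k)))
            - (Lam m (fun k => f (i.succAbove (q.succAbove k))) * f (i.succAbove q)) * f i := by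
        rw [mul_assoc, h1, mul_sub, mul_one, ← mul_assoc]
      have hcoef : (-1:ℤ)^(m+1+((i.succAbove q : Fin (m+2)):ℕ))
            * ((-1:ℤ)^(m+(((flip2 (i,q)).2 : Fin (m+1)):ℕ)) * (m:ℤ))
          = (-1:ℤ)^(i:ℕ) * ((m:ℤ) * (-1:ℤ)^(q:ℕ)) := by
        rw [show (-1:ℤ)^(m+1+((i.succAbove q : Fin (m+2)):ℕ))
              * ((-1:ℤ)^(m+(((flip2 (i,q)).2 : Fin (m+1)):ℕ)) * (m:ℤ))
            = (-1:ℤ)^((m+1+((i.succAbove q : Fin (m+2)):ℕ))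
                + (m+(((flip2 (i,q)).2 : Fin (m+1)):ℕ))) * (m:ℤ) from by
          rw [pow_add]; ring]
        rw [neg_one_pow_congr (a := (m+1+((i.succAbove q : Fin (m+2)):ℕ))
            + (m+(((flip2 (i,q)).2 : Fin (m+1)):ℕ))) (b := (i:ℕ)+(q:ℕ)) (by omega), pow_add]
        ring
      have e1 := ih (fun k => f ((i.succAbove q).succAbove k)) hrel' ((flip2 (i,q)).2)
      rw [hcomp, hip] at e1
      rw [e1, add_mul, smul_mul_assoc, smul_mul_assoc, smul_add]
      congr 1
      · rw [smul_smul, ← pow_add]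
        exact neg_one_pow_smul_congr (by omega) _ _ rfl
      · simp only [smul_smul]
        rw [h2, hcoef, smul_sub]
    have hA : (∑ q : Fin (m+1), (-1:ℤ)^(((i:ℕ)+m) + (q:ℕ)) •
        (Om m (fun k => f (i.succAbove (q.succAbove k))) * f (i.succAbove q)))
        = (-1:ℤ)^(i:ℕ) • Om (m+1) (fun k => f (i.succAbove k)) :=
      (OB m (fun k => f (i.succAbove k)) ((i:ℕ)+m)).trans
        (neg_one_pow_smul_congr (by omega) _ _ rfl)
    have hv : (∑ q : Fin (m+1), (-1:ℤ)^(q:ℕ) •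
        Lam m (fun k => f (i.succAbove (q.succAbove k)))) = 0 :=
      Lam_vanish m (fun k => f (i.succAbove k))
    have hB1 : (∑ q : Fin (m+1), (-1:ℤ)^(i:ℕ) • ((m:ℤ) •
        ((-1:ℤ)^(q:ℕ) • Lam m (fun k => f (i.succAbove (q.succAbove k)))))) = 0 := by
      rw [← Finset.smul_sum, ← Finset.smul_sum, hv, smul_zero, smul_zero]
    have e3 : (m:ℤ) • (∑ q : Fin (m+1), (-1:ℤ)^(q:ℕ) •
        (Lam m (fun k => f (i.succAbove (q.succAbove k))) * f (i.succAbove q)))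
        = (m:ℤ) • ((-1:ℤ)^m • Lam (m+1) (fun k => f (i.succAbove k))) :=
      LB' m (fun k => f (i.succAbove k))
    have hB2 : (∑ q : Fin (m+1), (-1:ℤ)^(i:ℕ) • ((m:ℤ) • ((-1:ℤ)^(q:ℕ) •
        ((Lam m (fun k => f (i.succAbove (q.succAbove k))) * f (i.succAbove q)) * f i))))
        = (-1:ℤ)^(i:ℕ) • (((m:ℤ) • ((-1:ℤ)^m • Lam (m+1) (fun k => f (i.succAbove k)))) * f i) := by
      rw [← Finset.smul_sum]
      congr 1
      have e2 : ∀ q : Fin (m+1), ((m:ℤ) • ((-1:ℤ)^(q:ℕ) •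
          ((Lam m (fun k => f (i.succAbove (q.succAbove k))) * f (i.succAbove q)) * f i)))
          = ((m:ℤ) • ((-1:ℤ)^(q:ℕ) •
            (Lam m (fun k => f (i.succAbove (q.succAbove k))) * f (i.succAbove q)))) * f i := by
        intro q; rw [smul_mul_assoc, smul_mul_assoc]
      rw [Finset.sum_congr rfl (fun q _ => e2 q), ← Finset.sum_mul, ← Finset.smul_sum, e3]
    rw [Lam_last m f, Fin.sum_univ_succAbove _ i]
    rw [Finset.sum_congr rfl (fun q _ => key q), Finset.sum_add_distrib,
      Finset.sum_sub_distrib, hA, hB1, hB2]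
    simp only [smul_mul_assoc]
    match_scalars <;> push_cast <;> ring


lemma IN (m : ℕ) (f : Fin (m+1) → A)
    (hrel : ∀ a b : Fin (m+1), a ≠ b → f a * f b + f b * f a = 1)
    (hsq : ∀ a b : Fin (m+1), Commute (f a * f a) (f b)) (i : Fin (m+1)) :
    f i * Om (m+1) f = (-1:ℤ)^m • (Om (m+1) f * f i) := by
  induction m with
  | zero =>
    have h0 : i = 0 := Fin.ext (by omega)
    subst h0
    simp [Om_succ]
  | succ m ih =>
    have key : ∀ q : Fin (m+1),
        f i * ((-1:ℤ)^((i.succAbove q : Fin (m+2)):ℕ) •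
          (f (i.succAbove q) * Om (m+1) (fun k => f ((i.succAbove q).succAbove k))))
        = (-1:ℤ)^((i.succAbove q : Fin (m+2)):ℕ) •
            Om (m+1) (fun k => f ((i.succAbove q).succAbove k))
          - (-1:ℤ)^m • ((-1:ℤ)^((i.succAbove q : Fin (m+2)):ℕ) •
            ((f (i.succAbove q) * Om (m+1) (fun k => f ((i.succAbove q).succAbove k))) * f i)) := by
      intro q
      have hip : (i.succAbove q).succAbove ((flip2 (i,q)).2) = i := by
        have h := flip2_apply (i,q); rwa [flip2_fst] at h
      have hrel' : ∀ a b : Fin (m+1), a ≠ b →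
          f ((i.succAbove q).succAbove a) * f ((i.succAbove q).succAbove b)
          + f ((i.succAbove q).succAbove b) * f ((i.succAbove q).succAbove a) = 1 :=
        fun a b hab => hrel _ _ (fun h => hab (Fin.succAbove_right_injective h))
      have hsq' : ∀ a b : Fin (m+1),
          Commute (f ((i.succAbove q).succAbove a) * f ((i.succAbove q).succAbove a))
            (f ((i.succAbove q).succAbove b)) := fun a b => hsq _ _
      have h1 : f i * f (i.succAbove q) = 1 - f (i.succAbove q) * f i :=
        eq_sub_of_add_eq (hrel i _ (Ne.symm (Fin.succAbove_ne i q)))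
      have e1 := ih (fun k => f ((i.succAbove q).succAbove k)) hrel' hsq' ((flip2 (i,q)).2)
      rw [hip] at e1
      rw [mul_smul_comm, ← mul_assoc, h1, sub_mul, one_mul, mul_assoc, e1,
        mul_smul_comm, ← mul_assoc (f (i.succAbove q))]
      match_scalars <;> ring
    have hS1 : (∑ q : Fin (m+1), (-1:ℤ)^((i.succAbove q : Fin (m+2)):ℕ) •
          Om (m+1) (fun k => f ((i.succAbove q).succAbove k)))
        = Lam (m+2) f - (-1:ℤ)^(i:ℕ) • Om (m+1) (fun k => f (i.succAbove k)) := by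
      rw [Lam_succ (m+1) f, Fin.sum_univ_succAbove
        (fun p => (-1:ℤ)^(p:ℕ) • Om (m+1) (fun k => f (p.succAbove k))) i, add_sub_cancel_left]
    have hS2 : (∑ q : Fin (m+1), (-1:ℤ)^((i.succAbove q : Fin (m+2)):ℕ) •
          ((f (i.succAbove q) * Om (m+1) (fun k => f ((i.succAbove q).succAbove k))) * f i))
        = (Om (m+2) f) * f i
          - (-1:ℤ)^(i:ℕ) • ((f i * Om (m+1) (fun k => f (i.succAbove k))) * f i) := by
      have homul : Om (m+2) f * f i = ∑ p : Fin (m+2), (-1:ℤ)^(p:ℕ) •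
          ((f p * Om (m+1) (fun k => f (p.succAbove k))) * f i) := by
        rw [Om_succ (m+1) f, Finset.sum_mul]
        exact Finset.sum_congr rfl fun p _ => smul_mul_assoc _ _ _
      rw [homul, Fin.sum_univ_succAbove
        (fun p => (-1:ℤ)^(p:ℕ) • ((f p * Om (m+1) (fun k => f (p.succAbove k))) * f i)) i,
        add_sub_cancel_left]
    have hy : ∀ b : Fin (m+1), f i * f (i.succAbove b) + f (i.succAbove b) * f i = 1 :=
      fun b => hrel i _ (Ne.symm (Fin.succAbove_ne i b))
    have hc : Commute (f i * f i) (Om (m+1) (fun k => f (i.succAbove k))) :=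
      commute_Om _ _ _ (fun b => hsq i _)
    have hOutMul : (f i * Om (m+1) (fun k => f (i.succAbove k))) * f i
        = (-1:ℤ)^(m+1) • ((f i * f i) * Om (m+1) (fun k => f (i.succAbove k)))
          + ((m+1 : ℕ):ℤ) • (Lam (m+1) (fun k => f (i.succAbove k)) * f i) := by
      rw [OUT (m+1) (fun k => f (i.succAbove k)) (f i) hy, add_mul, smul_mul_assoc,
        smul_mul_assoc, mul_assoc, ← hc.eq]
    have hti : f i * ((-1:ℤ)^(i:ℕ) •
          (f i * Om (m+1) (fun k => f (i.succAbove k))))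
        = (-1:ℤ)^(i:ℕ) • ((f i * f i) * Om (m+1) (fun k => f (i.succAbove k))) := by
      rw [mul_smul_comm, ← mul_assoc]
    have hC := Cprime (m+1) f hrel i
    conv_lhs => rw [Om_succ (m+1) f, Finset.mul_sum]
    rw [Fin.sum_univ_succAbove
      (fun p => f i * ((-1:ℤ)^(p:ℕ) • (f p * Om (m+1) (fun k => f (p.succAbove k))))) i,
      Finset.sum_congr rfl (fun q _ => key q), Finset.sum_sub_distrib, ← Finset.smul_sum,
      hS1, hS2, hti, hC, hOutMul]
    match_scalars <;> push_cast <;> ring_nf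
    all_goals simp [pow_mul']


def permE (m : ℕ) (x : Fin (m+1) × Equiv.Perm (Fin m)) : Equiv.Perm (Fin (m+1)) :=
  (Equiv.Perm.decomposeFin.symm (0, x.2)).trans (Fin.cycleRange x.1).symm

lemma permE_def (m : ℕ) (x : Fin (m+1) × Equiv.Perm (Fin m)) :
    ∀ j, permE m x j = (Fin.cycleRange x.1).symm (Equiv.Perm.decomposeFin.symm (0, x.2) j) :=
  fun _ => rfl

lemma permE_zero (m : ℕ) (x : Fin (m+1) × Equiv.Perm (Fin m)) : permE m x 0 = x.1 := by
  rw [permE_def]; simp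

lemma permE_succ (m : ℕ) (x : Fin (m+1) × Equiv.Perm (Fin m)) (k : Fin m) :
    permE m x k.succ = x.1.succAbove (x.2 k) := by
  rw [permE_def]; simp

lemma permE_sign (m : ℕ) (x : Fin (m+1) × Equiv.Perm (Fin m)) :
    (Equiv.Perm.sign (permE m x) : ℤ) = (-1:ℤ)^((x.1:ℕ)) * (Equiv.Perm.sign x.2 : ℤ) := by
  have : permE m x = (Fin.cycleRange x.1)⁻¹ * Equiv.Perm.decomposeFin.symm (0, x.2) := by
    ext j
    simp [permE, Equiv.Perm.mul_apply, Equiv.Perm.inv_def]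
  rw [this, map_mul, map_inv, Fin.sign_cycleRange, Equiv.Perm.decomposeFin.symm_sign]
  simp

lemma permE_bijective (m : ℕ) : Function.Bijective (permE m) := by
  rw [Fintype.bijective_iff_injective_and_card]
  constructor
  · intro x y hxy
    have h0 : x.1 = y.1 := by
      rw [← permE_zero m x, ← permE_zero m y, hxy]
    have h2 : x.2 = y.2 := by
      ext k
      have := congrArg (fun σ => σ k.succ) hxy
      simp only [permE_succ] at this
      rw [h0] at this
      exact congrArg Fin.val (Fin.succAbove_right_injective this)
    exact Prod.ext h0 h2
  · simp [Fintype.card_perm, Nat.factorial_succ]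

lemma Om_eq_perm_sum (m : ℕ) (f : Fin m → A) :
    (∑ σ : Equiv.Perm (Fin m), (Equiv.Perm.sign σ : ℤ) • (List.ofFn (fun k => f (σ k))).prod)
      = Om m f := by
  induction m with
  | zero =>
    have h0 : ∀ σ : Equiv.Perm (Fin 0), σ = 1 := fun σ => Equiv.ext fun j => j.elim0
    rw [Om_zero]
    calc ∑ σ : Equiv.Perm (Fin 0), (Equiv.Perm.sign σ : ℤ) • (List.ofFn fun k => f (σ k)).prod
        = ∑ _σ : Equiv.Perm (Fin 0), (1:A) :=
          Finset.sum_congr rfl (fun σ _ => by rw [h0 σ]; simp)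
      _ = 1 := by simp [Finset.card_univ, Fintype.card_perm]
  | succ m ih =>
    rw [← Fintype.sum_bijective (permE m) (permE_bijective m) _ _ (fun x => rfl),
      Fintype.sum_prod_type, Om_succ]
    refine Finset.sum_congr rfl (fun p _ => ?_)
    rw [← ih (fun k => f (p.succAbove k)), Finset.mul_sum, Finset.smul_sum]
    refine Finset.sum_congr rfl (fun τ _ => ?_)
    have hword : (List.ofFn fun k => f (permE m (p, τ) k)).prod
        = f p * (List.ofFn fun k => f (p.succAbove (τ k))).prod := by
      rw [List.ofFn_succ]
      simp only [permE_zero, permE_succ]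
      rw [List.prod_cons]
    rw [hword, permE_sign, mul_smul, mul_smul_comm]


lemma sq_commute {a b : A} (h : a * b + b * a = 1) : Commute (a * a) b := by
  have hab : a * b = 1 - b * a := eq_sub_of_add_eq h
  show a * a * b = b * (a * a)
  rw [mul_assoc, hab, mul_sub, mul_one, ← mul_assoc, hab, sub_mul, one_mul,
    sub_sub_cancel, mul_assoc]

end WnAux


section MainGlue

variable (k : Type*) [CommRing k]

lemma VnX_rel (n : ℕ) (i j : Fin n) (hij : i ≠ j) :
    VnX k n (fun _ _ => 1) i * VnX k n (fun _ _ => 1) j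
      + VnX k n (fun _ _ => 1) j * VnX k n (fun _ _ => 1) i = 1 := by
  have main : ∀ a b : Fin n, a < b → VnX k n (fun _ _ => 1) a * VnX k n (fun _ _ => 1) b
      + VnX k n (fun _ _ => 1) b * VnX k n (fun _ _ => 1) a = 1 := by
    intro a b hab
    have h := RingQuot.mkAlgHom_rel k (VnRel.rel (k := k) (a := fun _ _ => (1:k)) a b hab)
    rw [map_add, map_mul, map_mul] at h
    rw [VnX, VnX, h, AlgHom.commutes, map_one]
  rcases lt_or_gt_of_ne hij with h | h
  · exact main i j h
  · rw [add_comm]; exact main j i h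

end MainGlue

/-- in `W_n` over a commutative domain `k` (any characteristic), the
antisymmetrized product `Ωₙ` satisfies `xᵢ Ωₙ = (-1)^(n-1) Ωₙ xᵢ` for all `i`; in
particular, if `n` is odd then `Ωₙ` is central in `W_n`. -/
theorem Wn_omega_commutation (k : Type*) [CommRing k] [IsDomain k] (n : ℕ) :
    (∀ i : Fin n, VnX k n (fun _ _ => 1) i * WnOmega k n =
      (-1 : Vn k n (fun _ _ => 1)) ^ (n - 1) * (WnOmega k n * VnX k n (fun _ _ => 1) i)) ∧
    (Odd n → ∀ v : Vn k n (fun _ _ => 1), WnOmega k n * v = v * WnOmega k n) := by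
  have hOm : WnOmega k n = WnAux.Om n (fun i => VnX k n (fun _ _ => 1) i) := by
    rw [WnOmega, ← WnAux.Om_eq_perm_sum]
  have hrel : ∀ a b : Fin n, a ≠ b → VnX k n (fun _ _ => 1) a * VnX k n (fun _ _ => 1) b
      + VnX k n (fun _ _ => 1) b * VnX k n (fun _ _ => 1) a = 1 := fun a b => VnX_rel k n a b
  have hsq : ∀ a b : Fin n, Commute
      (VnX k n (fun _ _ => 1) a * VnX k n (fun _ _ => 1) a) (VnX k n (fun _ _ => 1) b) := by
    intro a b
    rcases eq_or_ne a b with rfl | hab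
    · exact ((Commute.refl _).mul_left (Commute.refl _))
    · exact WnAux.sq_commute (hrel a b hab)
  have part1 : ∀ i : Fin n, VnX k n (fun _ _ => 1) i * WnOmega k n =
      (-1 : Vn k n (fun _ _ => 1)) ^ (n - 1) * (WnOmega k n * VnX k n (fun _ _ => 1) i) := by
    intro i
    cases n with
    | zero => exact i.elim0
    | succ m =>
      have h := WnAux.IN m (fun i => VnX k (m+1) (fun _ _ => 1) i) hrel hsq i
      rw [hOm, h, zsmul_eq_mul]
      push_cast
      norm_num
  refine ⟨part1, fun hodd v => ?_⟩
  have hne : (-1 : Vn k n (fun _ _ => 1)) ^ (n - 1) = 1 := by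
    rcases hodd with ⟨t, ht⟩
    have h2 : n - 1 = 2 * t := by omega
    rw [h2, pow_mul]
    norm_num
  have hcomm : ∀ i : Fin n, Commute (WnOmega k n) (VnX k n (fun _ _ => 1) i) := by
    intro i
    have h := part1 i
    rw [hne, one_mul] at h
    exact h.symm
  obtain ⟨w, rfl⟩ := RingQuot.mkAlgHom_surjective k (VnRel k n (fun _ _ => 1)) v
  induction w using FreeAlgebra.induction with
  | grade0 r =>
    rw [AlgHom.commutes]
    exact (Algebra.commutes r (WnOmega k n)).symm
  | grade1 x => exact hcomm x
  | mul a b ha hb =>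
    rw [map_mul]
    exact (Commute.mul_right ha hb)
  | add a b ha hb =>
    rw [map_add]
    exact (Commute.add_right ha hb)
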